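/- Let n > q ≥ 1 be coprime integers and let a₁,…,a_s be the unique sequence of integers with a_i ≥ 2 and [a₁,…,a_s] = n/(n−q). Define (i₁,j₁) = (n,0), (i₂,j₂) = (n−q,1), and (i_{k+1}, j_{k+1}) = a_{k-1}·(i_k, j_k) − (i_{k-1}, j_{k-1}) for 2 ≤ k ≤ s+1. Then all i_k and j_k are nonnegative, the sequence i₁ > i₂ > … > i_{s+2} is strictly decreasing, and the sequence j₁ < j₂ < … < j_{s+2} is strictly increasing. -/
import Mathlib


/-- The negative (Hirzebruch–Jung) continued fraction `[a₁,…,a_s] = a₁ − 1/(a₂ − 1/(⋯ − 1/a_s))`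
of a list of integers, as an element of `ℚ`; `none` if it is not well defined, i.e. if some
intermediate denominator vanishes (or the list is empty). -/
def ncf : List ℤ → Option ℚ
  | [] => none
  | [a] => some (a : ℚ)
  | a :: b :: rest =>
      match ncf (b :: rest) with
      | none => none
      | some v => if v = 0 then none else some ((a : ℚ) - 1 / v)

/-- The exponent pairs `(i_k, j_k)` of the canonical coordinates `z_k = x^{i_k} y^{j_k}`
(with 0-based index: `seqIJ n q a m = (i_{m+1}, j_{m+1})`), defined by
`(i₁,j₁) = (n,0)`, `(i₂,j₂) = (n−q,1)` and
`(i_{k+1}, j_{k+1}) = a_{k-1}·(i_k, j_k) − (i_{k-1}, j_{k-1})`,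
where `a m` is the 0-based `m`-th entry, i.e. `a_{m+1}`. -/
def seqIJ (n q : ℤ) (a : ℕ → ℤ) : ℕ → ℤ × ℤ
  | 0 => (n, 0)
  | 1 => (n - q, 1)
  | (m + 2) =>
      (a m * (seqIJ n q a (m + 1)).1 - (seqIJ n q a m).1,
       a m * (seqIJ n q a (m + 1)).2 - (seqIJ n q a m).2)


lemma ncf_pos : ∀ a : List ℤ, a ≠ [] → (∀ x ∈ a, 2 ≤ x) → ∃ v : ℚ, ncf a = some v ∧ 1 < v := by
  intro a
  induction a with
  | nil => intro h; exact absurd rfl h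
  | cons a₀ rest ih =>
    intro _ ha2
    cases rest with
    | nil =>
      refine ⟨(a₀ : ℚ), rfl, ?_⟩
      have : (2:ℤ) ≤ a₀ := ha2 a₀ (by simp)
      exact_mod_cast lt_of_lt_of_le one_lt_two (by exact_mod_cast this)
    | cons b rest' =>
      obtain ⟨v, hv, hv1⟩ := ih (by simp) (fun x hx => ha2 x (by simp [hx]))
      have hvne : v ≠ 0 := by positivity
      refine ⟨(a₀ : ℚ) - 1 / v, ?_, ?_⟩
      · simp [ncf, hv, hvne]
      · have h2 : (2:ℚ) ≤ (a₀ : ℚ) := by exact_mod_cast ha2 a₀ (by simp)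
        have : 1 / v < 1 := by
          rw [div_lt_one (by linarith)]; linarith
        linarith

lemma key : ∀ (a : List ℤ), (∀ x ∈ a, 2 ≤ x) → ∀ (s : ℕ → ℤ),
    (∀ m < a.length, s (m+2) = a.getD m 0 * s (m+1) - s m) → 0 < s 1 →
    ncf a = some ((s 0 : ℚ) / (s 1 : ℚ)) →
    (∀ k ≤ a.length, 0 < s k) ∧ s (a.length + 1) = 0 ∧ (∀ k ≤ a.length, s (k+1) < s k) := by
  intro a
  induction a with
  | nil => intro _ s _ _ hv; simp [ncf] at hv
  | cons a₀ rest ih =>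
    intro ha2 s hrec h1 hv
    have ha₀ : (2:ℤ) ≤ a₀ := ha2 a₀ (by simp)
    have h1q : (0:ℚ) < (s 1 : ℚ) := by exact_mod_cast h1
    have h1ne : ((s 1 : ℤ) : ℚ) ≠ 0 := ne_of_gt h1q
    have hs2 : s 2 = a₀ * s 1 - s 0 := by
      have := hrec 0 (by simp); simpa using this
    cases rest with
    | nil =>
      have hv' : ((s 0 : ℤ) : ℚ) = (a₀ : ℚ) * (s 1 : ℤ) := by
        have : (a₀ : ℚ) = (s 0 : ℤ) / (s 1 : ℤ) := by
          have := hv.symm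
          simp [ncf] at this
          exact this.symm
        field_simp at this
        linarith [this]
      have hs0 : s 0 = a₀ * s 1 := by exact_mod_cast hv'
      have hs20 : s 2 = 0 := by rw [hs2, hs0]; ring
      refine ⟨?_, by simpa using hs20, ?_⟩
      · intro k hk
        simp only [List.length_cons, List.length_nil] at hk
        interval_cases k
        · rw [hs0]; nlinarith
        · exact h1
      · intro k hk
        simp only [List.length_cons, List.length_nil] at hk
        interval_cases k
        · rw [hs0]; nlinarith
        · simp only [hs20]; exact h1
    | cons b rest' =>
      obtain ⟨v, hvr, hv1⟩ := ncf_pos (b :: rest') (by simp)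
        (fun x hx => ha2 x (by simp [hx]))
      have hvne : v ≠ 0 := by positivity
      have hv' : ((s 0 : ℤ) : ℚ) / (s 1 : ℤ) = (a₀ : ℚ) - 1 / v := by
        have : ncf (a₀ :: b :: rest') = some ((a₀ : ℚ) - 1 / v) := by
          simp [ncf, hvr, hvne]
        rw [hv] at this
        exact (Option.some_injective _ this.symm).symm
      -- (s 2 : ℚ) = s 1 / v
      have hs2q : ((s 2 : ℤ) : ℚ) = (s 1 : ℤ) / v := by
        rw [hs2]
        push_cast
        have h2 : ((s 0 : ℤ) : ℚ) = (s 1) * ((a₀ : ℚ) - 1 / v) := by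
          field_simp at hv' ⊢
          linarith [hv']
        rw [h2]
        field_simp
        ring
      have hs2pos : (0:ℤ) < s 2 := by
        have : (0:ℚ) < ((s 2 : ℤ) : ℚ) := by
          rw [hs2q]; positivity
        exact_mod_cast this
      have hs2lt : s 2 < s 1 := by
        have : ((s 2 : ℤ) : ℚ) < (s 1 : ℤ) := by
          rw [hs2q, div_lt_iff₀ (by linarith)]
          nlinarith
        exact_mod_cast this
      have hs2ne : ((s 2 : ℤ) : ℚ) ≠ 0 := by
        exact_mod_cast ne_of_gt hs2pos
      have hnext : ncf (b :: rest') = some ((s 1 : ℤ) / ((s 2 : ℤ) : ℚ)) := by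
        rw [hvr]
        congr 1
        rw [eq_div_iff hs2ne, hs2q]
        field_simp
      have hrec' : ∀ m < (b :: rest').length,
          (fun m => s (m+1)) (m+2) = (b :: rest').getD m 0 * (fun m => s (m+1)) (m+1)
            - (fun m => s (m+1)) m := by
        intro m hm
        have := hrec (m+1) (by simpa using Nat.succ_lt_succ hm)
        simpa using this
      obtain ⟨hpos, hzero, hdec⟩ := ih (fun x hx => ha2 x (by simp [hx]))
        (fun m => s (m+1)) hrec' hs2pos hnext
      have hs01 : s 1 < s 0 := by
        have : ((s 1 : ℤ) : ℚ) < (s 0 : ℤ) := by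
          have h0 : ((s 0 : ℤ) : ℚ) = (s 1) * ((a₀ : ℚ) - 1 / v) := by
            field_simp at hv' ⊢
            linarith [hv']
          rw [h0]
          have hv1' : 1 / v < 1 := by rw [div_lt_one (by linarith)]; exact hv1
          nlinarith [h1q, ha₀, (by exact_mod_cast ha₀ : (2:ℚ) ≤ (a₀:ℚ))]
        exact_mod_cast this
      refine ⟨?_, by simpa using hzero, ?_⟩
      · intro k hk
        cases k with
        | zero => linarith
        | succ k => exact hpos k (by simpa using Nat.lt_succ_iff.mp (Nat.lt_succ_of_le hk))
      · intro k hk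
        cases k with
        | zero => exact hs01
        | succ k => exact hdec k (by simpa using Nat.lt_succ_iff.mp (Nat.lt_succ_of_le hk))


theorem stmt12 (n q : ℤ) (hq : 1 ≤ q) (hqn : q < n) (hco : Int.gcd n q = 1)
    (a : List ℤ) (ha2 : ∀ x ∈ a, 2 ≤ x)
    (hval : ncf a = some ((n : ℚ) / ((n : ℚ) - (q : ℚ)))) :
    (∀ k ≤ a.length + 1,
        0 ≤ (seqIJ n q (fun m => a.getD m 0) k).1 ∧
        0 ≤ (seqIJ n q (fun m => a.getD m 0) k).2) ∧
    (∀ k < a.length + 1,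
        (seqIJ n q (fun m => a.getD m 0) (k + 1)).1 < (seqIJ n q (fun m => a.getD m 0) k).1 ∧
        (seqIJ n q (fun m => a.getD m 0) k).2 < (seqIJ n q (fun m => a.getD m 0) (k + 1)).2) := by
  set f : ℕ → ℤ := fun m => a.getD m 0 with hf
  set s : ℕ → ℤ := fun k => (seqIJ n q f k).1 with hs
  set j : ℕ → ℤ := fun k => (seqIJ n q f k).2 with hj
  have hs0 : s 0 = n := rfl
  have hs1 : s 1 = n - q := rfl
  have hj0 : j 0 = 0 := rfl
  have hj1 : j 1 = 1 := rfl
  have hsrec : ∀ m, s (m + 2) = f m * s (m + 1) - s m := fun m => rfl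
  have hjrec : ∀ m, j (m + 2) = f m * j (m + 1) - j m := fun m => rfl
  have h1 : 0 < s 1 := by rw [hs1]; omega
  have hv : ncf a = some ((s 0 : ℚ) / (s 1 : ℚ)) := by
    rw [hval, hs0, hs1]
    push_cast
    ring_nf
  obtain ⟨hpos, hzero, hdec⟩ := key a ha2 s (fun m _ => hsrec m) h1 hv
  have Hj : ∀ k < a.length + 1, 0 ≤ j k ∧ j k < j (k + 1) := by
    intro k
    induction k with
    | zero => intro _; rw [hj0, hj1]; omega
    | succ k ih =>
      intro hk
      obtain ⟨h0, h1'⟩ := ih (by omega)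
      have hfk : 2 ≤ f k := by
        have hk' : k < a.length := by omega
        have : a.getD k 0 = a[k] := List.getD_eq_getElem a 0 hk'
        rw [hf]; simp only [this]
        exact ha2 _ (List.getElem_mem hk')
      constructor
      · omega
      · rw [hjrec k]; nlinarith
  constructor
  · intro k hk
    constructor
    · show 0 ≤ s k
      rcases Nat.lt_or_ge k (a.length + 1) with h | h
      · exact le_of_lt (hpos k (by omega))
      · have : k = a.length + 1 := by omega
        rw [this, hzero]
    · show 0 ≤ j k
      cases k with
      | zero => rw [hj0]
      | succ k =>
        obtain ⟨h0, h1'⟩ := Hj k (by omega)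
        omega
  · intro k hk
    exact ⟨hdec k (by omega), (Hj k hk).2⟩
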